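/- arXiv:2107.02363 — 2 statements merged into one kernel-verified Lean document; each statement's English description precedes it below -/
import Mathlib

section
/- Let $g : [0,1] \to [0,1]$ be measurable with $g^{-1} \in L^{\gamma}([0,1])$ for some $\gamma \in [1, \infty)$, and let $\alpha \in (0,1]$. Then the function $f(x,y) := (g(x)g(y)^{\alpha} + g(x)^{\alpha}g(y))^{-1}$ belongs to $L^{\tilde\gamma}([0,1]^2)$ where $\tilde\gamma = \min\{\gamma, \gamma/\alpha\}$. -/
open MeasureTheory

/-- If `g : [0,1] → [0,1]` has `g⁻¹ ∈ L^γ([0,1])` and `α ∈ (0,1]`, then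
`f(x,y) = (g(x)g(y)^α + g(x)^α g(y))⁻¹` belongs to `L^{min{γ, γ/α}}([0,1]²)`. -/
theorem reciprocal_degree_product_Lp (g : ℝ → ℝ) (γ α : ℝ)
    (hγ : 1 ≤ γ) (hα : 0 < α) (hα1 : α ≤ 1)
    (hmeas : Measurable g)
    (hrange : ∀ x ∈ Set.Icc (0:ℝ) 1, g x ∈ Set.Icc (0:ℝ) 1)
    (hpos : ∀ᵐ x ∂(volume.restrict (Set.Icc (0:ℝ) 1)), 0 < g x)
    (hLp : MemLp (fun x => (g x)⁻¹) (ENNReal.ofReal γ)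
      (volume.restrict (Set.Icc (0:ℝ) 1))) :
    MemLp (fun z : ℝ × ℝ => (g z.1 * g z.2 ^ α + g z.1 ^ α * g z.2)⁻¹)
      (ENNReal.ofReal (min γ (γ / α)))
      (volume.restrict (Set.Icc (0:ℝ) 1 ×ˢ Set.Icc (0:ℝ) 1)) := by
  have hγ0 : (0:ℝ) < γ := by linarith
  set s : Set ℝ := Set.Icc (0:ℝ) 1 with hs
  set μ : Measure ℝ := volume.restrict s with hμ
  -- the exponent is just γ
  have hmin : min γ (γ / α) = γ := min_eq_left (le_div_self hγ0.le hα hα1)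
  rw [hmin]
  -- the restricted product measure is the product of restrictions
  have hprodμ : volume.restrict (s ×ˢ s) = μ.prod μ := by
    rw [hμ, Measure.prod_restrict, ← Measure.volume_eq_prod]
  rw [hprodμ]
  have hq0 : ENNReal.ofReal γ ≠ 0 := by
    simp [ENNReal.ofReal_eq_zero]; linarith
  have hqt : ENNReal.ofReal γ ≠ ⊤ := ENNReal.ofReal_ne_top
  -- the dominating function h z = (g z.1)⁻¹ * (g z.2)⁻¹ is in L^γ of the product
  have hu_int : Integrable (fun x => ‖(g x)⁻¹‖ ^ γ) μ := by
    have := hLp.integrable_norm_rpow hq0 hqt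
    simpa [ENNReal.toReal_ofReal hγ0.le] using this
  have hh_int : Integrable
      (fun z : ℝ × ℝ => ‖(g z.1)⁻¹ * (g z.2)⁻¹‖ ^ γ) (μ.prod μ) := by
    have := hu_int.mul_prod hu_int
    refine this.congr (Filter.Eventually.of_forall fun z => ?_)
    simp only [norm_mul]
    rw [Real.mul_rpow (norm_nonneg _) (norm_nonneg _)]
  have hhmeas : AEStronglyMeasurable
      (fun z : ℝ × ℝ => (g z.1)⁻¹ * (g z.2)⁻¹) (μ.prod μ) :=
    ((hmeas.comp measurable_fst).inv.mul
      (hmeas.comp measurable_snd).inv).aestronglyMeasurable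
  have hh : MemLp (fun z : ℝ × ℝ => (g z.1)⁻¹ * (g z.2)⁻¹)
      (ENNReal.ofReal γ) (μ.prod μ) := by
    refine (memLp_norm_rpow_iff hhmeas hq0 hqt).mp ?_
    rw [ENNReal.div_self hq0 hqt, memLp_one_iff_integrable]
    simpa [ENNReal.toReal_ofReal hγ0.le] using hh_int
  -- a.e. positivity on the product
  have hpos2 : ∀ᵐ z : ℝ × ℝ ∂(μ.prod μ), 0 < g z.1 ∧ 0 < g z.2 := by
    rw [Measure.ae_prod_iff_ae_ae]
    · filter_upwards [hpos] with x hx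
      filter_upwards [hpos] with y hy
      exact ⟨hx, hy⟩
    · exact (measurableSet_lt measurable_const (hmeas.comp measurable_fst)).inter
        (measurableSet_lt measurable_const (hmeas.comp measurable_snd))
  -- a.e. membership in the square
  have hmem : ∀ᵐ z : ℝ × ℝ ∂(μ.prod μ), z ∈ s ×ˢ s := by
    rw [← hprodμ]
    exact ae_restrict_mem (measurableSet_Icc.prod measurableSet_Icc)
  -- conclude by domination
  refine hh.mono ?_ ?_
  · apply Measurable.aestronglyMeasurable
    fun_prop
  · filter_upwards [hpos2, hmem] with z hz hzm
    obtain ⟨hx, hy⟩ := hz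
    obtain ⟨hxm, hym⟩ := hzm
    have hx1 : g z.1 ≤ 1 := (hrange _ hxm).2
    have hy1 : g z.2 ≤ 1 := (hrange _ hym).2
    have hya : g z.2 ≤ g z.2 ^ α := by
      have := Real.rpow_le_rpow_of_exponent_ge hy hy1 hα1
      simpa [Real.rpow_one] using this
    have hxa : 0 ≤ g z.1 ^ α := Real.rpow_nonneg hx.le _
    have hmul : g z.1 * g z.2 ≤ g z.1 * g z.2 ^ α + g z.1 ^ α * g z.2 := by
      have h1 : g z.1 * g z.2 ≤ g z.1 * g z.2 ^ α :=
        mul_le_mul_of_nonneg_left hya hx.le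
      nlinarith [mul_nonneg hxa hy.le]
    have hxy : 0 < g z.1 * g z.2 := mul_pos hx hy
    have hinv : (g z.1 * g z.2 ^ α + g z.1 ^ α * g z.2)⁻¹ ≤ (g z.1 * g z.2)⁻¹ :=
      inv_anti₀ hxy hmul
    have hsum : (0:ℝ) ≤ (g z.1 * g z.2 ^ α + g z.1 ^ α * g z.2)⁻¹ :=
      inv_nonneg.mpr ((lt_of_lt_of_le hxy hmul).le)
    rw [Real.norm_eq_abs, Real.norm_eq_abs, abs_of_nonneg hsum,
      abs_of_nonneg (mul_nonneg (inv_nonneg.mpr hx.le) (inv_nonneg.mpr hy.le))]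
    rwa [mul_inv] at hinv
end

section
/- Consider minimizing, over symmetric positive semidefinite $2\times2$ matrices $K = \begin{pmatrix} K_{11} & K_{12} \\ K_{12} & K_{11} \end{pmatrix}$ with equal diagonal, the function $F(K) = -pK_{11} + \log(1+e^{K_{11}}) - qK_{12} + \log(1+e^{K_{12}})$ where $p, q \in (0,1)$ and the PSD constraint amounts to $K_{11} \ge 0$ and $K_{11} \ge |K_{12}|$. Then the unique minimizer is: (a) $K_{11} = \sigma^{-1}(p)$, $K_{12} = \sigma^{-1}(q)$ if $p \ge q$ and $p + q \ge 1$; (b) $K_{11} = -K_{12} = \sigma^{-1}((1+p-q)/2)$ if $p \ge q$ and $p + q < 1$; (c) $K_{11} = K_{12} = \sigma^{-1}((p+q)/2)$ if $p < q$ and $p + q \ge 1$; (d) $K_{11} = K_{12} = 0$ otherwise; where $\sigma^{-1}(y) = \log(y/(1-y))$ is the inverse sigmoid. -/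
noncomputable def sig (t : ℝ) : ℝ := Real.exp t / (1 + Real.exp t)

lemma one_add_exp_pos (t : ℝ) : 0 < 1 + Real.exp t := by positivity

lemma sig_lt_sig {a b : ℝ} (h : a < b) : sig a < sig b := by
  unfold sig
  rw [div_lt_div_iff₀ (one_add_exp_pos a) (one_add_exp_pos b)]
  have := Real.exp_lt_exp.mpr h
  nlinarith [Real.exp_pos a, Real.exp_pos b]

lemma hasDerivAt_phi (c x : ℝ) :
    HasDerivAt (fun x => Real.log (1 + Real.exp x) - c * x) (sig x - c) x := by
  have h1 : HasDerivAt (fun x => 1 + Real.exp x) (Real.exp x) x :=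
    (Real.hasDerivAt_exp x).const_add 1
  have h2 := h1.log (ne_of_gt (one_add_exp_pos x))
  have h3 := h2.sub ((hasDerivAt_id x).const_mul c)
  convert h3 using 1
  · rfl
  · rfl
  · funext y; simp
  simp [sig]

lemma tangent {s t : ℝ} (h : t ≠ s) :
    Real.log (1 + Real.exp s) + sig s * (t - s) < Real.log (1 + Real.exp t) := by
  set φ : ℝ → ℝ := fun x => Real.log (1 + Real.exp x) - sig s * x with hφ
  have hd : ∀ x, HasDerivAt φ (sig x - sig s) x := fun x => hasDerivAt_phi (sig s) x
  have hc : Continuous φ := continuous_iff_continuousAt.mpr fun x => (hd x).continuousAt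
  have hφst : φ s < φ t := by
    rcases lt_or_gt_of_ne h with hlt | hgt
    · have hA : StrictAntiOn φ (Set.Iic s) := by
        apply strictAntiOn_of_deriv_neg (convex_Iic s) hc.continuousOn
        intro x hx
        rw [interior_Iic] at hx
        rw [(hd x).deriv]
        linarith [sig_lt_sig hx]
      exact hA (le_of_lt hlt) (le_refl s) hlt
    · have hM : StrictMonoOn φ (Set.Ici s) := by
        apply strictMonoOn_of_deriv_pos (convex_Ici s) hc.continuousOn
        intro x hx
        rw [interior_Ici] at hx
        rw [(hd x).deriv]
        linarith [sig_lt_sig hx]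
      exact hM (le_refl s) (le_of_lt hgt) hgt
  simp only [hφ] at hφst
  nlinarith [hφst]

lemma tangent_le (s t : ℝ) :
    Real.log (1 + Real.exp s) + sig s * (t - s) ≤ Real.log (1 + Real.exp t) := by
  rcases eq_or_ne t s with rfl | h
  · simp
  · exact (tangent h).le

lemma sig_logit {a : ℝ} (h0 : 0 < a) (h1 : a < 1) :
    sig (Real.log (a / (1 - a))) = a := by
  have h1a : (0:ℝ) < 1 - a := by linarith
  unfold sig
  rw [Real.exp_log (by positivity)]
  field_simp
  ring

lemma sig_neg (t : ℝ) : sig (-t) = 1 - sig t := by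
  unfold sig
  rw [Real.exp_neg]
  have := Real.exp_pos t
  field_simp
  ring

lemma sig_zero : sig 0 = 1/2 := by simp [sig]; norm_num

lemma logit_mono {a b : ℝ} (h0 : 0 < a) (hab : a ≤ b) (h1 : b < 1) :
    Real.log (a / (1 - a)) ≤ Real.log (b / (1 - b)) := by
  have hb : (0:ℝ) < 1 - b := by linarith
  have ha : (0:ℝ) < 1 - a := by linarith
  apply Real.log_le_log (by positivity)
  rw [div_le_div_iff₀ ha hb]
  nlinarith

lemma logit_nonneg {a : ℝ} (h : 1/2 ≤ a) (h1 : a < 1) :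
    0 ≤ Real.log (a / (1 - a)) := by
  apply Real.log_nonneg
  rw [le_div_iff₀ (by linarith)]
  linarith

lemma neg_logit_le {a b : ℝ} (ha0 : 0 < a) (ha1 : a < 1) (hb0 : 0 < b) (hb1 : b < 1)
    (h : 1 ≤ a + b) : -Real.log (b / (1 - b)) ≤ Real.log (a / (1 - a)) := by
  have h1b : (0:ℝ) < 1 - b := by linarith
  have h1a : (0:ℝ) < 1 - a := by linarith
  rw [← Real.log_inv, inv_div]
  apply Real.log_le_log (by positivity)
  rw [div_le_div_iff₀ hb0 h1a]
  nlinarith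

lemma min_of_grad (p q m₁ m₂ : ℝ)
    (hgrad : ∀ K : ℝ × ℝ, 0 ≤ K.1 → |K.2| ≤ K.1 →
      0 ≤ (sig m₁ - p) * (K.1 - m₁) + (sig m₂ - q) * (K.2 - m₂)) :
    ∀ K : ℝ × ℝ, 0 ≤ K.1 → |K.2| ≤ K.1 → K ≠ (m₁, m₂) →
      -p * m₁ + Real.log (1 + Real.exp m₁) - q * m₂ + Real.log (1 + Real.exp m₂) <
      -p * K.1 + Real.log (1 + Real.exp K.1) - q * K.2 + Real.log (1 + Real.exp K.2) := by
  intro K hK1 hK2 hne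
  have hg := hgrad K hK1 hK2
  have hor : K.1 ≠ m₁ ∨ K.2 ≠ m₂ := by
    by_contra hc; push_neg at hc; exact hne (Prod.ext hc.1 hc.2)
  rcases hor with h | h
  · have h1 := tangent h
    have h2 := tangent_le m₂ K.2
    nlinarith [h1, h2, hg]
  · have h1 := tangent_le m₁ K.1
    have h2 := tangent h
    nlinarith [h1, h2, hg]


/-- Closed form for the minimizer of the two-community SBM population risk over
PSD `2×2` matrices with equal diagonal: minimizing
`F(K) = -pK₁₁ + log(1+e^{K₁₁}) - qK₁₂ + log(1+e^{K₁₂})` over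
`{(K₁₁,K₁₂) : K₁₁ ≥ 0, |K₁₂| ≤ K₁₁}` has the unique minimizer given by the
four cases in terms of the inverse sigmoid `σ⁻¹(y) = log(y/(1-y))`. -/
theorem sbm_two_community_minimizer (p q : ℝ)
    (hp : p ∈ Set.Ioo (0:ℝ) 1) (hq : q ∈ Set.Ioo (0:ℝ) 1) :
    let logit : ℝ → ℝ := fun y => Real.log (y / (1 - y))
    let F : ℝ × ℝ → ℝ := fun K =>
      -p * K.1 + Real.log (1 + Real.exp K.1) - q * K.2 + Real.log (1 + Real.exp K.2)
    let S : Set (ℝ × ℝ) := {K | 0 ≤ K.1 ∧ |K.2| ≤ K.1}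
    let m : ℝ × ℝ :=
      if q ≤ p ∧ 1 ≤ p + q then (logit p, logit q)
      else if q ≤ p ∧ p + q < 1 then
        (logit ((1 + p - q) / 2), -logit ((1 + p - q) / 2))
      else if p < q ∧ 1 ≤ p + q then (logit ((p + q) / 2), logit ((p + q) / 2))
      else (0, 0)
    m ∈ S ∧ ∀ K ∈ S, K ≠ m → F m < F K := by
  obtain ⟨hp0, hp1⟩ := hp
  obtain ⟨hq0, hq1⟩ := hq
  intro logit F S m
  simp only [logit, F, S, m, Set.mem_setOf_eq]
  split_ifs with h1 h2 h3
  · -- case (a): interior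
    obtain ⟨hqp, hpq⟩ := h1
    have hp2 : 1/2 ≤ p := by linarith
    refine ⟨⟨logit_nonneg hp2 hp1,
      abs_le.mpr ⟨neg_logit_le hq0 hq1 hp0 hp1 (by linarith), logit_mono hq0 hqp hp1⟩⟩, ?_⟩
    intro K hK hne
    refine min_of_grad p q _ _ ?_ K hK.1 hK.2 hne
    intro K' _ _
    rw [sig_logit hp0 hp1, sig_logit hq0 hq1]
    ring_nf
    exact le_refl 0
  · -- case (b): K₂ = -K₁ boundary
    obtain ⟨hqp, hpq⟩ := h2
    have hr0 : (0:ℝ) < (1 + p - q) / 2 := by linarith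
    have hr1 : (1 + p - q) / 2 < 1 := by linarith
    have hr2 : 1/2 ≤ (1 + p - q) / 2 := by linarith
    have hmem : 0 ≤ Real.log ((1 + p - q) / 2 / (1 - (1 + p - q) / 2)) :=
      logit_nonneg hr2 hr1
    refine ⟨⟨hmem, by rw [abs_neg, abs_of_nonneg hmem]⟩, ?_⟩
    intro K hK hne
    refine min_of_grad p q _ _ ?_ K hK.1 hK.2 hne
    intro K' hK1 hK2
    rw [sig_neg, sig_logit hr0 hr1]
    have h12 : -K'.1 ≤ K'.2 := (abs_le.mp hK2).1
    nlinarith [hmem, h12]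
  · -- case (c): K₂ = K₁ boundary
    obtain ⟨hqp, hpq⟩ := h3
    have hr0 : (0:ℝ) < (p + q) / 2 := by linarith
    have hr1 : (p + q) / 2 < 1 := by linarith
    have hr2 : 1/2 ≤ (p + q) / 2 := by linarith
    have hmem : 0 ≤ Real.log ((p + q) / 2 / (1 - (p + q) / 2)) := logit_nonneg hr2 hr1
    refine ⟨⟨hmem, by rw [abs_of_nonneg hmem]⟩, ?_⟩
    intro K hK hne
    refine min_of_grad p q _ _ ?_ K hK.1 hK.2 hne
    intro K' hK1 hK2
    rw [sig_logit hr0 hr1]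
    have h12 : K'.2 ≤ K'.1 := (abs_le.mp hK2).2
    nlinarith [h12]
  · -- case (d): origin
    push_neg at h1 h2 h3
    have hpq' : p < q := by
      by_contra hc
      push_neg at hc
      rcases lt_or_ge (p + q) 1 with h | h
      · exact absurd h (h2 hc).not_gt
      · exact absurd h (h1 hc).not_ge
    have hsum : p + q < 1 := by
      by_contra hc
      push_neg at hc
      exact absurd hc (h3 hpq').not_ge
    refine ⟨⟨le_refl 0, by simp⟩, ?_⟩
    intro K hK hne
    refine min_of_grad p q _ _ ?_ K hK.1 hK.2 hne
    intro K' hK1 hK2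
    rw [sig_zero]
    have h12 : -K'.1 ≤ K'.2 := (abs_le.mp hK2).1
    have h13 : K'.2 ≤ K'.1 := (abs_le.mp hK2).2
    nlinarith [h12, h13, hK1]
end
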